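/- For every integer N > 3 there exist two signals x and y, both with support {0,…,N-1}, such that |𝓕x(ω)| = |𝓕y(ω)| for all ω ∈ ℝ and |x[n]| = |y[n]| for all n ∈ ℤ, but y is not of the form e^{iα} x for any α ∈ ℝ. Explicitly, for η₁, η₂ real with η₁, η₂ > 1, take 𝓕x(ω) = (e^{-iω} - η₁)(e^{-iω} + η₁^{-1})(e^{-iω} - iη₂)^{N-3} and 𝓕y(ω) = (e^{-iω} - η₁^{-1})(e^{-iω} + η₁)(e^{-iω} - iη₂)^{N-3}. -/

import Mathlib

open Complex Polynomial

noncomputable def PRpoly (N : ℕ) (η₁ η₂ : ℝ) : Polynomial ℂ :=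
  (X - C (η₁ : ℂ)) * (X + C ((η₁ : ℂ)⁻¹)) * (X - C (Complex.I * (η₂ : ℂ))) ^ (N - 3)

noncomputable def xsig (N : ℕ) (η₁ η₂ : ℝ) (n : ℤ) : ℂ :=
  if 0 ≤ n then (PRpoly N η₁ η₂).coeff n.toNat else 0

noncomputable def ysig (N : ℕ) (η₁ η₂ : ℝ) (n : ℤ) : ℂ :=
  (-1 : ℂ) ^ (N - 1) * (-1 : ℂ) ^ n * (starRingEnd ℂ) (xsig N η₁ η₂ n)

lemma PRpoly_natDegree (N : ℕ) (hN : 3 < N) (η₁ η₂ : ℝ) :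
    (PRpoly N η₁ η₂).natDegree = N - 1 := by
  have m1 := monic_X_sub_C (η₁ : ℂ)
  have m2 := monic_X_add_C ((η₁ : ℂ)⁻¹)
  have m3 := (monic_X_sub_C (Complex.I * (η₂ : ℂ))).pow (N - 3)
  rw [PRpoly, (m1.mul m2).natDegree_mul m3, m1.natDegree_mul m2,
    natDegree_X_sub_C, natDegree_X_add_C, natDegree_pow, natDegree_X_sub_C]
  omega

lemma sum_xsig (N : ℕ) (hN : 3 < N) (η₁ η₂ : ℝ) (w : ℂ) :
    ∑ n ∈ Finset.range N, xsig N η₁ η₂ (n : ℤ) * w ^ n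
      = (w - η₁) * (w + (η₁ : ℂ)⁻¹) * (w - Complex.I * η₂) ^ (N - 3) := by
  have hd : (PRpoly N η₁ η₂).natDegree < N := by
    rw [PRpoly_natDegree N hN]; omega
  have := (eval_eq_sum_range' hd w).symm
  calc ∑ n ∈ Finset.range N, xsig N η₁ η₂ (n : ℤ) * w ^ n
      = ∑ n ∈ Finset.range N, (PRpoly N η₁ η₂).coeff n * w ^ n := by
        refine Finset.sum_congr rfl fun n _ => ?_
        simp [xsig, Int.toNat_natCast]
    _ = (PRpoly N η₁ η₂).eval w := this
    _ = _ := by simp [PRpoly]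

lemma sum_ysig (N : ℕ) (hN : 3 < N) (η₁ η₂ : ℝ) (w : ℂ) :
    ∑ n ∈ Finset.range N, ysig N η₁ η₂ (n : ℤ) * w ^ n
      = (w - (η₁ : ℂ)⁻¹) * (w + η₁) * (w - Complex.I * η₂) ^ (N - 3) := by
  have key : ∑ n ∈ Finset.range N, ysig N η₁ η₂ (n : ℤ) * w ^ n
      = (-1 : ℂ) ^ (N - 1) *
        (starRingEnd ℂ) (∑ n ∈ Finset.range N,
          xsig N η₁ η₂ (n : ℤ) * ((starRingEnd ℂ) (-w)) ^ n) := by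
    rw [map_sum, Finset.mul_sum]
    refine Finset.sum_congr rfl fun n _ => ?_
    rw [map_mul, map_pow, Complex.conj_conj, ysig, zpow_natCast, neg_pow]
    ring
  rw [key, sum_xsig N hN, map_mul, map_mul, map_pow, map_sub, map_sub, map_add, map_mul]
  simp only [RingHomCompTriple.comp_apply, map_neg, Complex.conj_conj, Complex.conj_ofReal,
    map_inv₀, Complex.conj_I]
  have h2 : (-1 : ℂ) ^ (N - 1) = (-1) ^ (N - 3) * (-1) ^ 2 := by
    rw [← pow_add]; congr 1; omega
  have h3 : ((-1 : ℂ)) ^ (N - 3) * (-w - -(Complex.I * η₂)) ^ (N - 3)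
      = (w - Complex.I * η₂) ^ (N - 3) := by
    rw [← mul_pow]; congr 1; ring
  rw [h2]
  simp only [RingHom.id_apply]
  linear_combination ((-w - (η₁:ℂ)) * (-w + (η₁:ℂ)⁻¹)) * h3

theorem nonuniqueness_with_full_moduli
    (N : ℕ) (hN : 3 < N) (η₁ η₂ : ℝ) (hη₁ : 1 < η₁) (hη₂ : 1 < η₂) :
    ∃ x y : ℤ → ℂ,
      (∀ n : ℤ, (n < 0 ∨ (N : ℤ) ≤ n) → x n = 0) ∧
      (∀ n : ℤ, (n < 0 ∨ (N : ℤ) ≤ n) → y n = 0) ∧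
      (∀ ω : ℝ,
        ∑ n ∈ Finset.range N, x n * Complex.exp (-Complex.I * (ω : ℂ) * (n : ℂ))
          = (Complex.exp (-Complex.I * (ω : ℂ)) - (η₁ : ℂ)) *
            (Complex.exp (-Complex.I * (ω : ℂ)) + (η₁ : ℂ)⁻¹) *
            (Complex.exp (-Complex.I * (ω : ℂ)) - Complex.I * (η₂ : ℂ)) ^ (N - 3)) ∧
      (∀ ω : ℝ,
        ∑ n ∈ Finset.range N, y n * Complex.exp (-Complex.I * (ω : ℂ) * (n : ℂ))
          = (Complex.exp (-Complex.I * (ω : ℂ)) - (η₁ : ℂ)⁻¹) *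
            (Complex.exp (-Complex.I * (ω : ℂ)) + (η₁ : ℂ)) *
            (Complex.exp (-Complex.I * (ω : ℂ)) - Complex.I * (η₂ : ℂ)) ^ (N - 3)) ∧
      (∀ ω : ℝ,
        ‖∑ n ∈ Finset.range N, x n * Complex.exp (-Complex.I * (ω : ℂ) * (n : ℂ))‖
          = ‖∑ n ∈ Finset.range N, y n * Complex.exp (-Complex.I * (ω : ℂ) * (n : ℂ))‖) ∧
      (∀ n : ℤ, ‖x n‖ = ‖y n‖) ∧
      ¬ ∃ α : ℝ, ∀ n : ℤ, y n = Complex.exp (Complex.I * (α : ℂ)) * x n := by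
  have hη0 : (η₁ : ℂ) ≠ 0 := by
    exact_mod_cast ne_of_gt (show (0:ℝ) < η₁ by linarith)
  have hxsupp : ∀ n : ℤ, (n < 0 ∨ (N : ℤ) ≤ n) → xsig N η₁ η₂ n = 0 := by
    intro n h
    rcases h with h | h
    · exact if_neg (by omega)
    · rw [xsig, if_pos (by omega)]
      apply coeff_eq_zero_of_natDegree_lt
      rw [PRpoly_natDegree N hN]; omega
  have hexp : ∀ (ω : ℝ) (n : ℕ),
      Complex.exp (-Complex.I * (ω:ℂ) * (n:ℂ)) = Complex.exp (-Complex.I * (ω:ℂ)) ^ n := by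
    intro ω n
    rw [show (-Complex.I * (ω:ℂ) * (n:ℂ)) = (n:ℂ) * (-Complex.I * ω) by ring,
      Complex.exp_nat_mul]
  have hFTx : ∀ ω : ℝ,
      ∑ n ∈ Finset.range N, xsig N η₁ η₂ (n:ℤ) * Complex.exp (-Complex.I * (ω:ℂ) * (n:ℂ))
        = (Complex.exp (-Complex.I * (ω:ℂ)) - (η₁:ℂ)) *
          (Complex.exp (-Complex.I * (ω:ℂ)) + (η₁:ℂ)⁻¹) *
          (Complex.exp (-Complex.I * (ω:ℂ)) - Complex.I * (η₂:ℂ)) ^ (N - 3) := by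
    intro ω
    simp_rw [hexp ω]
    exact sum_xsig N hN η₁ η₂ _
  have hFTy : ∀ ω : ℝ,
      ∑ n ∈ Finset.range N, ysig N η₁ η₂ (n:ℤ) * Complex.exp (-Complex.I * (ω:ℂ) * (n:ℂ))
        = (Complex.exp (-Complex.I * (ω:ℂ)) - (η₁:ℂ)⁻¹) *
          (Complex.exp (-Complex.I * (ω:ℂ)) + (η₁:ℂ)) *
          (Complex.exp (-Complex.I * (ω:ℂ)) - Complex.I * (η₂:ℂ)) ^ (N - 3) := by
    intro ω
    simp_rw [hexp ω]
    exact sum_ysig N hN η₁ η₂ _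
  refine ⟨xsig N η₁ η₂, ysig N η₁ η₂, hxsupp, ?_, hFTx, hFTy, ?_, ?_, ?_⟩
  · intro n h
    simp [ysig, hxsupp n h]
  · -- abs equality
    intro ω
    rw [hFTx, hFTy]
    set z := Complex.exp (-Complex.I * (ω:ℂ)) with hzdef
    have hz1 : ‖z‖ = 1 := by
      simp [hzdef, Complex.norm_exp]
    have hz0 : z ≠ 0 := Complex.exp_ne_zero _
    have hmc : z * (starRingEnd ℂ) z = 1 := by
      rw [Complex.mul_conj, Complex.normSq_eq_norm_sq, hz1]
      norm_num
    have hcz : (starRingEnd ℂ) z = z⁻¹ := by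
      field_simp at hmc ⊢
      linear_combination hmc
    have e1 : z - (η₁:ℂ)⁻¹ = -(η₁:ℂ)⁻¹ * z * (starRingEnd ℂ) (z - (η₁:ℂ)) := by
      rw [map_sub, hcz, Complex.conj_ofReal]
      field_simp
      ring
    have e2 : z + (η₁:ℂ)⁻¹ = (η₁:ℂ)⁻¹ * z * (starRingEnd ℂ) (z + (η₁:ℂ)) := by
      rw [map_add, hcz, Complex.conj_ofReal]
      field_simp
      ring
    have hinvabs : ‖((η₁:ℂ)⁻¹)‖ = η₁⁻¹ := by
      rw [norm_inv, Complex.norm_real, Real.norm_eq_abs, abs_of_pos (by linarith)]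
    rw [norm_mul, norm_mul, norm_mul, norm_mul, e1, e2]
    rw [norm_mul, norm_mul, norm_mul, norm_mul, norm_neg, Complex.norm_conj,
      Complex.norm_conj, hinvabs, hz1]
    ring
  · -- moduli of coefficients
    intro n
    simp [ysig, map_mul, map_zpow₀, map_pow]
  · -- non-uniqueness
    rintro ⟨α, hα⟩
    set c := Complex.exp (Complex.I * (α:ℂ)) with hcdef
    have key : ∀ w : ℂ,
        (w - (η₁:ℂ)⁻¹) * (w + η₁) * (w - Complex.I * η₂) ^ (N - 3)
          = c * ((w - η₁) * (w + (η₁:ℂ)⁻¹) * (w - Complex.I * η₂) ^ (N - 3)) := by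
      intro w
      rw [← sum_xsig N hN η₁ η₂ w, ← sum_ysig N hN η₁ η₂ w, Finset.mul_sum]
      exact Finset.sum_congr rfl fun n _ => by rw [hα]; ring
    have hinv : (η₁:ℂ) * (η₁:ℂ)⁻¹ = 1 := mul_inv_cancel₀ hη0
    have hdr : η₁ - η₁⁻¹ ≠ 0 := by
      have h1 : η₁⁻¹ < 1 := by
        rw [inv_lt_one_iff₀]; right; exact hη₁
      nlinarith
    have hd : ((η₁:ℂ) - (η₁:ℂ)⁻¹) ≠ 0 := by
      rw [show (η₁:ℂ) - (η₁:ℂ)⁻¹ = ((η₁ - η₁⁻¹ : ℝ) : ℂ) by push_cast; ring]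
      exact_mod_cast hdr
    have hG1 : ((1:ℂ) - Complex.I * η₂) ^ (N - 3) ≠ 0 := by
      apply pow_ne_zero
      intro h
      have := congrArg Complex.im h
      simp at this
      linarith
    have hG2 : ((-Complex.I : ℂ) - Complex.I * η₂) ^ (N - 3) ≠ 0 := by
      apply pow_ne_zero
      intro h
      have := congrArg Complex.im h
      simp at this
      linarith
    have k1 := key 1
    have hA : ((1:ℂ) - (η₁:ℂ)⁻¹) * (1 + η₁) = c * ((1 - η₁) * (1 + (η₁:ℂ)⁻¹)) := by
      have := mul_right_cancel₀ hG1 (by linear_combination k1 :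
        ((1:ℂ) - (η₁:ℂ)⁻¹) * (1 + η₁) * ((1:ℂ) - Complex.I * η₂) ^ (N - 3)
          = c * ((1 - η₁) * (1 + (η₁:ℂ)⁻¹)) * ((1:ℂ) - Complex.I * η₂) ^ (N - 3))
      exact this
    have hc : c = -1 := by
      apply mul_right_cancel₀ hd
      linear_combination hA + (1 - c) * hinv
    have k2 := key (-Complex.I)
    rw [hc] at k2
    have hB : ((-Complex.I:ℂ) - (η₁:ℂ)⁻¹) * (-Complex.I + η₁)
        = -1 * (((-Complex.I:ℂ) - η₁) * (-Complex.I + (η₁:ℂ)⁻¹)) := by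
      have := mul_right_cancel₀ hG2 (by linear_combination k2 :
        ((-Complex.I:ℂ) - (η₁:ℂ)⁻¹) * (-Complex.I + η₁) * ((-Complex.I:ℂ) - Complex.I * η₂) ^ (N - 3)
          = -1 * (((-Complex.I:ℂ) - η₁) * (-Complex.I + (η₁:ℂ)⁻¹)) * ((-Complex.I:ℂ) - Complex.I * η₂) ^ (N - 3))
      exact this
    have h4 : (4:ℂ) = 0 := by
      linear_combination -hB - 2 * hinv + 2 * Complex.I_sq
    norm_num at h4
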